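/- Let F be a field, m ≥ 2, and let i ≠ j be indices in {0, …, m−1}. Let f ∈ F[X] have degree n, with coefficients a_0, a_1, …, a_n. Then, in m×m matrices over F[X]: I_m + f·E_{ij} = (∏_{k=1}^{n} (I_m + (a_k·X^k − a_k)·E_{ij})) · (I_m + f(1)·E_{ij}), where E_{ij} is the matrix unit with 1 in position (i,j) and 0 elsewhere (regarded over F[X]), f(1) ∈ F is the evaluation of f at 1, and the product may be taken in any order since all factors commute. -/

import Mathlib

open Polynomial

lemma prod_one_add_stdBasis {F : Type*} [CommRing F] {m : ℕ}
    (i j : Fin m) (hij : i ≠ j) (L : List F) :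
    (L.map (fun g => (1 : Matrix (Fin m) (Fin m) F) + Matrix.single i j g)).prod
      = 1 + Matrix.single i j L.sum := by
  induction L with
  | nil => simp
  | cons a L ih =>
      simp only [List.map_cons, List.prod_cons, ih, List.sum_cons, add_mul, one_mul, mul_add,
        mul_one]
      rw [Matrix.single_mul_single_of_ne (h := hij.symm), Matrix.single_add]
      abel

lemma list_range_sum_eq {M : Type*} [AddCommMonoid M] (g : ℕ → M) (n : ℕ) :
    ((List.range n).map g).sum = ∑ k ∈ Finset.range n, g k := by
  induction n with
  | zero => simp
  | succ n ih => rw [List.range_succ, Finset.sum_range_succ, ← ih]; simp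

/-- The factorization (3.16) of an elementary (transvection) matrix:
`I_m + f·E_{ij} = (∏_{k=1}^{n} (I_m + (a_k·X^k − a_k)·E_{ij})) · (I_m + f(1)·E_{ij})`. -/
theorem transvection_factorization {F : Type*} [Field F] {m : ℕ} (hm : 2 ≤ m)
    (i j : Fin m) (hij : i ≠ j) (f : F[X]) (n : ℕ) (hn : f.natDegree = n) :
    (1 : Matrix (Fin m) (Fin m) F[X]) + Matrix.single i j f =
      (((List.range n).map (fun k =>
        (1 : Matrix (Fin m) (Fin m) F[X]) + Matrix.single i j
          (Polynomial.C (f.coeff (k + 1)) * (X : F[X]) ^ (k + 1)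
            - Polynomial.C (f.coeff (k + 1))))).prod) *
      ((1 : Matrix (Fin m) (Fin m) F[X])
        + Matrix.single i j (Polynomial.C (f.eval 1))) := by
  have key := prod_one_add_stdBasis i j hij
    ((List.range n).map (fun k => Polynomial.C (f.coeff (k + 1)) * (X : F[X]) ^ (k + 1)
      - Polynomial.C (f.coeff (k + 1))))
  rw [List.map_map] at key
  simp only [Function.comp_def] at key
  rw [key, add_mul, one_mul, mul_add, mul_one, Matrix.single_mul_single_of_ne (h := hij.symm),
    add_zero, list_range_sum_eq, add_assoc, ← Matrix.single_add]
  have hf : f = ∑ k ∈ Finset.range (n + 1), Polynomial.C (f.coeff k) * X ^ k := by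
    conv_lhs => rw [f.as_sum_range' (n + 1) (by omega)]
    refine Finset.sum_congr rfl fun k _ => ?_
    rw [Polynomial.C_mul_X_pow_eq_monomial]
  have hev : f.eval 1 = ∑ k ∈ Finset.range (n + 1), f.coeff k := by
    conv_lhs => rw [hf]
    simp [Polynomial.eval_finset_sum]
  have hpoly : (∑ k ∈ Finset.range n, (Polynomial.C (f.coeff (k + 1)) * (X : F[X]) ^ (k + 1)
      - Polynomial.C (f.coeff (k + 1)))) + Polynomial.C (f.eval 1) = f := by
    rw [Finset.sum_sub_distrib, hev, map_sum,
      Finset.sum_range_succ' (fun k => Polynomial.C (f.coeff k)) n]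
    conv_rhs => rw [hf]
    rw [Finset.sum_range_succ' (fun k => Polynomial.C (f.coeff k) * X ^ k) n]
    simp only [pow_zero, mul_one]
    abel
  rw [add_comm (Polynomial.C (f.eval 1)), hpoly]
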